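/- The map ν with components ν_A : PR_k A → P_k A defined by ν_A(s, i) = s[1,i] (the length-i prefix of s) is a morphism of comonads from PR_k to P_k: each ν_A is a σ-homomorphism, ν is natural in A, and ν commutes with the counits and comultiplications of the two comonads. -/

import Mathlib

/-- A relational signature: a type of relation symbols with arities. -/
structure Signature where
  symb : Type
  ar : symb → ℕ

/-- A σ-structure: a universe with interpretations of the relation symbols. -/
structure Struct (σ : Signature) where
  carrier : Type
  rel : ∀ r : σ.symb, (Fin (σ.ar r) → carrier) → Prop

/-- σ-homomorphism. -/
def Hom {σ : Signature} (A B : Struct σ) (f : A.carrier → B.carrier) : Prop :=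
  ∀ r x, A.rel r x → B.rel r (fun j => f (x j))

/-- Sequences of pebble placements. -/
abbrev PSeq (k : ℕ) (α : Type) := List (Fin k × α)

/-- Universe of PR_k A: a play together with an index into it. -/
def PRW (k : ℕ) (α : Type) : Type := { p : PSeq k α × ℕ // p.2 < p.1.length }

def eltOf {k : ℕ} {α : Type} (w : PRW k α) : α := (w.1.1.get ⟨w.1.2, w.2⟩).2
def pebOf {k : ℕ} {α : Type} (w : PRW k α) : Fin k := (w.1.1.get ⟨w.1.2, w.2⟩).1

/-- The pebble p (placed at position i) does not reoccur at positions i+1,...,m of s. -/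
def NoReoccur {k : ℕ} {α : Type} (s : PSeq k α) (i m : ℕ) (p : Fin k) : Prop :=
  ∀ l (h : l < s.length), i < l → l ≤ m → (s.get ⟨l, h⟩).1 ≠ p

/-- The pebble-relation construction PR_k on σ-structures. -/
def PR {σ : Signature} (k : ℕ) (A : Struct σ) : Struct σ where
  carrier := PRW k A.carrier
  rel r x :=
    (∀ j j', (x j).1.1 = (x j').1.1) ∧
    (∀ j j', NoReoccur (x j).1.1 (x j).1.2 (x j').1.2 (pebOf (x j))) ∧
    A.rel r (fun j => eltOf (x j))

/-- Counit ε(s,i) = a_i. -/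
def counit {k : ℕ} {α : Type} (w : PRW k α) : α := eltOf w

/-- Coextension f*(s,i) = (t,i) with same pebbles and j-th element f(s,j). -/
def coext {k : ℕ} {α β : Type} (f : PRW k α → β) (w : PRW k α) : PRW k β :=
  ⟨(List.ofFn (fun j : Fin w.1.1.length => ((w.1.1.get j).1, f ⟨(w.1.1, j.1), j.2⟩)), w.1.2),
   by simpa using w.2⟩

/-- Comultiplication δ = (id)*. -/
def comult {k : ℕ} {α : Type} : PRW k α → PRW k (PRW k α) := coext id

/-- Functor action PR_k f = (f ∘ ε)*. -/
def PRmap {k : ℕ} {α β : Type} (f : α → β) : PRW k α → PRW k β :=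
  coext (f ∘ counit)


/-- Universe of the pebbling comonad P_k: nonempty plays. -/
def PW (k : ℕ) (α : Type) : Type := { s : PSeq k α // s ≠ [] }

def lastPebP {k : ℕ} {α : Type} (w : PW k α) : Fin k := (w.1.getLast w.2).1
def pcounit {k : ℕ} {α : Type} (w : PW k α) : α := (w.1.getLast w.2).2

/-- The pebbling comonad construction P_k on σ-structures. -/
def Pk {σ : Signature} (k : ℕ) (A : Struct σ) : Struct σ where
  carrier := PW k A.carrier
  rel r x :=
    (∀ j j', (x j).1 <+: (x j').1 ∨ (x j').1 <+: (x j).1) ∧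
    (∀ j j', (x j).1 <+: (x j').1 →
      ∀ l (h : l < (x j').1.length), (x j).1.length ≤ l →
        ((x j').1.get ⟨l, h⟩).1 ≠ lastPebP (x j)) ∧
    A.rel r (fun j => pcounit (x j))

theorem take_ne_nil {k : ℕ} {α : Type} (s : PSeq k α) (i : ℕ) (h : i < s.length) :
    s.take (i + 1) ≠ [] := by
  apply List.ne_nil_of_length_pos
  simp [List.length_take]
  omega

/-- ν(s,i) = length-(i+1) prefix of s (the prefix up to the marked position). -/
def nu {k : ℕ} {α : Type} (w : PRW k α) : PW k α :=
  ⟨w.1.1.take (w.1.2 + 1), take_ne_nil _ _ w.2⟩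

/-- Functor action of P_k on functions. -/
def Pmap {k : ℕ} {α β : Type} (f : α → β) (w : PW k α) : PW k β :=
  ⟨w.1.map (fun q => (q.1, f q.2)), by simpa using w.2⟩

/-- Comultiplication of P_k : δ'(s) = [(p_1,s[1,1]),...,(p_n,s[1,n])]. -/
def pcomult {k : ℕ} {α : Type} (w : PW k α) : PW k (PW k α) :=
  ⟨List.ofFn (fun j : Fin w.1.length =>
     ((w.1.get j).1, (⟨w.1.take (j.1 + 1), take_ne_nil _ _ j.2⟩ : PW k α))),
   by
     apply List.ne_nil_of_length_pos
     simp [List.length_ofFn]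
     first | exact List.length_pos_iff.mpr w.2 | exact w.2⟩


lemma getLast_take' {α : Type} (s : List α) (i : ℕ) (h : i < s.length) (h' : s.take (i+1) ≠ []) :
    (s.take (i+1)).getLast h' = s.get ⟨i, h⟩ := by
  rw [List.getLast_eq_getElem]
  simp [List.length_take, Nat.min_eq_left (Nat.succ_le_of_lt h)]

lemma pcounit_nu {k : ℕ} {α : Type} (w : PRW k α) : pcounit (nu w) = counit w := by
  show ((w.1.1.take (w.1.2+1)).getLast _).2 = _
  exact congrArg Prod.snd (getLast_take' _ _ w.2 _)

lemma lastPebP_nu {k : ℕ} {α : Type} (w : PRW k α) : lastPebP (nu w) = pebOf w := by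
  show ((w.1.1.take (w.1.2+1)).getLast _).1 = _
  exact congrArg Prod.fst (getLast_take' _ _ w.2 _)

lemma take_prefix_take {α : Type} (s : List α) {i j : ℕ} (h : i ≤ j) : s.take i <+: s.take j :=
  List.prefix_take_iff.mpr ⟨List.take_prefix _ _, by simp; omega⟩

lemma nu_length {k : ℕ} {α : Type} (w : PRW k α) : (nu w).1.length = w.1.2 + 1 := by
  have := w.2; simp [nu, List.length_take]; omega

/-- ν_A(s,i) = s[1,i] is a morphism of comonads PR_k → P_k:
each component is a σ-homomorphism, ν is natural, and ν commutes with the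
counits and the comultiplications. -/
theorem nu_comonad_morphism (σ : Signature) (k : ℕ) :
    (∀ A : Struct σ, Hom (PR k A) (Pk k A) nu) ∧
    (∀ (A B : Struct σ) (f : A.carrier → B.carrier), Hom A B f →
      Pmap f ∘ (nu : PRW k A.carrier → PW k A.carrier) = nu ∘ PRmap f) ∧
    (∀ A : Struct σ,
      pcounit ∘ (nu : PRW k A.carrier → PW k A.carrier) = counit) ∧
    (∀ A : Struct σ,
      (nu ∘ PRmap (nu : PRW k A.carrier → PW k A.carrier)) ∘
          (comult : PRW k A.carrier → PRW k (PRW k A.carrier)) =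
        pcomult ∘ nu) := by
  refine ⟨?_, ?_, ?_, ?_⟩
  · intro A r x ⟨hsame, hnr, hrel⟩
    refine ⟨?_, ?_, ?_⟩
    · intro j j'
      rcases le_total (x j).1.2 (x j').1.2 with h | h
      · left
        show (nu (x j)).1 <+: (nu (x j')).1
        simp only [nu]
        rw [hsame j j']; exact take_prefix_take _ (by omega)
      · right
        show (nu (x j')).1 <+: (nu (x j)).1
        simp only [nu]
        rw [hsame j' j]; exact take_prefix_take _ (by omega)
    · intro j j' _ l hl hge
      refine ne_of_ne_of_eq ?_ (lastPebP_nu (x j)).symm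
      have hl' : l < (x j').1.1.length := lt_of_lt_of_le hl (by simp [nu, List.length_take])
      have hgl : (nu (x j')).1.get ⟨l, hl⟩ = (x j').1.1.get ⟨l, hl'⟩ := by
        simp [nu, List.getElem_take]
      refine ne_of_eq_of_ne (congrArg Prod.fst hgl) ?_
      have := hnr j j' l
      rw [hsame j j'] at this
      refine this hl' ?_ ?_
      · have := nu_length (x j); change (nu (x j)).1.length ≤ l at hge; omega
      · have := nu_length (x j'); change l < (nu (x j')).1.length at hl
        have h2 := (x j').2; omega
    · have : (fun j => pcounit (nu (x j))) = fun j => counit (x j) := by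
        funext j; exact pcounit_nu (x j)
      show A.rel r (fun j => pcounit (nu (x j)))
      rw [this]; exact hrel
  · intro A B f hf
    funext w
    apply Subtype.ext
    show ((nu w).1.map _) = (PRmap f w).1.1.take ((PRmap f w).1.2 + 1)
    have hlen : (PRmap f w).1.1.length = w.1.1.length := by
      simp [PRmap, coext]
    apply List.ext_getElem
    · simp [nu, PRmap, coext, List.length_take]
    · intro n h1 h2
      simp [nu, PRmap, coext, counit, eltOf, List.getElem_take]
      rfl
  · intro A
    funext w
    exact pcounit_nu w
  · intro A
    funext w
    apply Subtype.ext
    apply List.ext_getElem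
    · show ((nu (PRmap nu (comult w))).1).length = (pcomult (nu w)).1.length
      simp [nu, PRmap, coext, comult, pcomult, List.length_take]
    · intro n h1 h2
      change n < ((nu (PRmap nu (comult w))).1).length at h1
      have hn : n ≤ w.1.2 := by
        simp [nu, PRmap, coext, comult, List.length_take] at h1; omega
      have hnl : n < w.1.1.length := lt_of_le_of_lt hn w.2
      show ((nu (PRmap nu (comult w))).1)[n] = (pcomult (nu w)).1[n]
      simp [nu, PRmap, coext, comult, pcomult, counit, eltOf, List.getElem_take]
      refine Prod.ext rfl ?_
      apply Subtype.ext
      show (nu ((List.get (α := Fin k × PRW k A.carrier) (List.ofFn _) _).2)).1 = _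
      rw [List.get_ofFn]
      show w.1.1.take (n+1) = (w.1.1.take ((w:PRW k A.carrier).1.2+1)).take (n+1)
      rw [List.take_take, Nat.min_eq_left (by omega)]
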